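/- Let n ≥ 1, Q = 2n+2, and let μ be an upper Ahlfors regular measure on ℍⁿ. For α, β ≥ 0 let Q_{α,β} = {(z,t) ∈ ℍⁿ : |z| ≤ α, |t| ≤ β}. Then there exists c > 0 such that for every (ρ,τ) ∈ ℍⁿ and all α, β ≥ 0, μ((ρ,τ)∘Q_{α,β}) ≤ c·α^{2n}·β, where (ρ,τ)∘Q_{α,β} = {(w,s) : (ρ,τ)⁻¹∘(w,s) ∈ Q_{α,β}}. -/

import Mathlib

open MeasureTheory Complex

noncomputable section

/-- The Heisenberg group `ℍⁿ` as a set: `ℂⁿ × ℝ`. -/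
abbrev Heis (n : ℕ) : Type := (Fin n → ℂ) × ℝ

/-- Euclidean norm of a point of `ℂⁿ`. -/
def znorm {n : ℕ} (z : Fin n → ℂ) : ℝ := Real.sqrt (∑ j, ‖z j‖ ^ 2)

/-- The Heisenberg group operation
`(z,t)∘(w,s) = (z+w, t+s+(1/2)·Im(z·w̄))`. -/
def Hmul {n : ℕ} (p q : Heis n) : Heis n :=
  (p.1 + q.1, p.2 + q.2 + (1 / 2) * (∑ j, p.1 j * (starRingEnd ℂ) (q.1 j)).im)

/-- The Heisenberg group inverse `(z,t)⁻¹ = (−z,−t)`. -/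
def Hinv {n : ℕ} (p : Heis n) : Heis n := (-p.1, -p.2)

/-- The Korányi norm `‖(z,t)‖ = (|z|⁴+t²)^{1/4}`. -/
def koranyi {n : ℕ} (p : Heis n) : ℝ := (znorm p.1 ^ 4 + p.2 ^ 2) ^ ((1 : ℝ) / 4)

/-- The Korányi distance `dist((z,t),(w,s)) = ‖(z,t)⁻¹∘(w,s)‖`. -/
def Hdist {n : ℕ} (p q : Heis n) : ℝ := koranyi (Hmul (Hinv p) q)

/-- The Heisenberg ball `𝔅_r(p)` of radius `r` centered at `p`. -/
def Hball {n : ℕ} (p : Heis n) (r : ℝ) : Set (Heis n) := {q | Hdist p q < r}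

/-- The set `B_ρ = {(z,t) : |z| ≤ ρ, |t| ≤ ρ²}`. -/
def Hbox (n : ℕ) (ρ : ℝ) : Set (Heis n) := {p | znorm p.1 ≤ ρ ∧ |p.2| ≤ ρ ^ 2}

/-- Left translate of a set: `p ∘ S = {q : p⁻¹∘q ∈ S}`. -/
def Htranslate {n : ℕ} (p : Heis n) (S : Set (Heis n)) : Set (Heis n) :=
  {q | Hmul (Hinv p) q ∈ S}

/-- The discrepancy
`D_N(z,t;ρ) = Σ_{j=1}^N χ_{(z,t)∘B_ρ}(ζⱼ,τⱼ) − N·μ((z,t)∘B_ρ)`. -/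
def disc {n : ℕ} (μ : Measure (Heis n)) {N : ℕ} (pts : Fin N → Heis n)
    (p : Heis n) (ρ : ℝ) : ℝ :=
  (∑ j, (Htranslate p (Hbox n ρ)).indicator (fun _ => (1 : ℝ)) (pts j))
    - N * (μ (Htranslate p (Hbox n ρ))).toReal

/-- The box `Q_{α,β} = {(z,t) ∈ ℍⁿ : |z| ≤ α, |t| ≤ β}`. -/
def Qbox (n : ℕ) (α β : ℝ) : Set (Heis n) := {p | znorm p.1 ≤ α ∧ |p.2| ≤ β}

namespace HeisAux
variable {n : ℕ}

/-- The sesquilinear sum appearing in the group law. -/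
def ws (z w : Fin n → ℂ) : ℂ := ∑ j, z j * (starRingEnd ℂ) (w j)

lemma ws_add_left (x y w : Fin n → ℂ) : ws (x + y) w = ws x w + ws y w := by
  simp [ws, add_mul, Finset.sum_add_distrib]

lemma ws_add_right (z x y : Fin n → ℂ) : ws z (x + y) = ws z x + ws z y := by
  simp [ws, mul_add, Finset.sum_add_distrib]

lemma ws_neg_left (x w : Fin n → ℂ) : ws (-x) w = - ws x w := by
  simp [ws]

lemma ws_neg_right (z x : Fin n → ℂ) : ws z (-x) = - ws z x := by
  simp [ws]

lemma ws_self_im (z : Fin n → ℂ) : (ws z z).im = 0 := by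
  simp [ws, Complex.im_sum, Complex.mul_conj]

lemma ws_conj (z w : Fin n → ℂ) : (starRingEnd ℂ) (ws z w) = ws w z := by
  simp [ws, map_sum, map_mul, mul_comm]

lemma ws_swap_im (z w : Fin n → ℂ) : (ws w z).im = -(ws z w).im := by
  rw [← ws_conj z w, Complex.conj_im]

lemma znorm_eq (z : Fin n → ℂ) : znorm z = ‖(WithLp.equiv 2 (Fin n → ℂ)).symm z‖ := by
  simp [znorm, EuclideanSpace.norm_eq]

lemma znorm_nonneg (z : Fin n → ℂ) : 0 ≤ znorm z := Real.sqrt_nonneg _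

lemma znorm_add_le (x y : Fin n → ℂ) : znorm (x + y) ≤ znorm x + znorm y := by
  rw [znorm_eq, znorm_eq, znorm_eq]
  exact norm_add_le ((WithLp.equiv 2 (Fin n → ℂ)).symm x) ((WithLp.equiv 2 (Fin n → ℂ)).symm y)

lemma znorm_neg (x : Fin n → ℂ) : znorm (-x) = znorm x := by simp [znorm]

lemma norm_coord_le (z : Fin n → ℂ) (j : Fin n) : ‖z j‖ ≤ znorm z := by
  rw [znorm, show ‖z j‖ = Real.sqrt (‖z j‖^2) from (Real.sqrt_sq (norm_nonneg _)).symm]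
  exact Real.sqrt_le_sqrt (Finset.single_le_sum (f := fun i => ‖z i‖^2)
    (fun i _ => sq_nonneg _) (Finset.mem_univ j))

lemma abs_ws_im_le (z w : Fin n → ℂ) : |(ws z w).im| ≤ znorm z * znorm w := by
  have h1 : ws z w = (inner ℂ ((WithLp.equiv 2 (Fin n → ℂ)).symm w)
      ((WithLp.equiv 2 (Fin n → ℂ)).symm z) : ℂ) := by
    simp [ws, PiLp.inner_apply, RCLike.inner_apply, mul_comm]
  calc |(ws z w).im| ≤ ‖ws z w‖ := Complex.abs_im_le_norm _
    _ = ‖(inner ℂ ((WithLp.equiv 2 (Fin n → ℂ)).symm w)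
        ((WithLp.equiv 2 (Fin n → ℂ)).symm z) : ℂ)‖ := by rw [← h1]
    _ ≤ ‖(WithLp.equiv 2 (Fin n → ℂ)).symm w‖ * ‖(WithLp.equiv 2 (Fin n → ℂ)).symm z‖ :=
        norm_inner_le_norm _ _
    _ = znorm z * znorm w := by rw [← znorm_eq, ← znorm_eq]; ring

lemma key_inv (p a b : Heis n) : Hmul (Hinv (Hmul p a)) (Hmul p b) = Hmul (Hinv a) b := by
  refine Prod.ext ?_ ?_
  · show -(p.1 + a.1) + (p.1 + b.1) = -a.1 + b.1
    abel
  · show -(p.2 + a.2 + (1/2) * (ws p.1 a.1).im) + (p.2 + b.2 + (1/2) * (ws p.1 b.1).im)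
      + (1/2) * (ws (-(p.1 + a.1)) (p.1 + b.1)).im
      = -a.2 + b.2 + (1/2) * (ws (-a.1) b.1).im
    rw [ws_neg_left, ws_add_left, ws_add_right, ws_add_right, ws_neg_left]
    simp only [Complex.neg_im, Complex.add_im]
    rw [ws_self_im, ws_swap_im a.1 p.1]
    ring

lemma hmul_inv_cancel (p q : Heis n) : Hmul p (Hmul (Hinv p) q) = q := by
  refine Prod.ext ?_ ?_
  · show p.1 + (-p.1 + q.1) = q.1
    abel
  · show p.2 + (-p.2 + q.2 + (1/2) * (ws (-p.1) q.1).im)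
      + (1/2) * (ws p.1 (-p.1 + q.1)).im = q.2
    rw [ws_neg_left, ws_add_right, ws_neg_right]
    simp only [Complex.neg_im, Complex.add_im]
    rw [ws_self_im]
    ring

lemma hdist_hmul (p a b : Heis n) : Hdist (Hmul p a) (Hmul p b) = Hdist a b := by
  unfold Hdist
  rw [key_inv]

lemma koranyi_lt {x : Heis n} {r : ℝ} (hr : 0 < r)
    (h1 : znorm x.1 ≤ r / 2) (h2 : |x.2| ≤ r ^ 2 / 4) : koranyi x < r := by
  have ha : 0 ≤ znorm x.1 := znorm_nonneg _
  have e1 : znorm x.1 ^ 4 ≤ (r/2) ^ 4 := pow_le_pow_left₀ ha h1 4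
  have e2 : x.2 ^ 2 ≤ (r^2/4) ^ 2 := by
    calc x.2 ^ 2 = |x.2| ^ 2 := (_root_.sq_abs _).symm
      _ ≤ (r^2/4) ^ 2 := pow_le_pow_left₀ (abs_nonneg _) h2 2
  have h4 : znorm x.1 ^ 4 + x.2 ^ 2 < r ^ 4 := by nlinarith [pow_pos hr 4]
  have h0 : 0 ≤ znorm x.1 ^ 4 + x.2 ^ 2 := add_nonneg (pow_nonneg ha 4) (sq_nonneg _)
  calc koranyi x = (znorm x.1 ^ 4 + x.2 ^ 2) ^ ((1:ℝ)/4) := rfl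
    _ < (r ^ 4) ^ ((1:ℝ)/4) := Real.rpow_lt_rpow h0 h4 (by norm_num)
    _ = r := by
        rw [← Real.rpow_natCast r 4, ← Real.rpow_mul hr.le]
        norm_num

lemma round_abs_le (x : ℝ) : |(round x : ℝ)| ≤ |x| + 1/2 := by
  have h1 := abs_sub_round x
  have h2 : (round x : ℝ) = x + -(x - round x) := by ring
  rw [h2]
  refine (abs_add_le _ _).trans ?_
  rw [abs_neg]
  linarith

lemma round_grid_abs {x h : ℝ} (hh : 0 < h) : |x - round (x/h) * h| ≤ h / 2 := by
  have h1 : |x/h - round (x/h)| ≤ 1/2 := abs_sub_round _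
  have h2 : x - round (x/h) * h = (x/h - round (x/h)) * h := by field_simp
  rw [h2, abs_mul, abs_of_pos hh]
  nlinarith


set_option maxHeartbeats 1000000 in
lemma cover_bound (n : ℕ) (hn : 1 ≤ n) (μ : Measure (Heis n)) (c₀ : ℝ)
    (hA : ∀ (p : Heis n) (r : ℝ), 0 < r →
      μ (Hball p r) ≤ ENNReal.ofReal (c₀ * r ^ (2 * n + 2)))
    (p : Heis n) (α β r : ℝ) (hα : 0 ≤ α) (hβ : 0 ≤ β) (hr : 0 < r) (hc₀ : 0 ≤ c₀) :
    μ (Htranslate p (Qbox n α β)) ≤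
      ENNReal.ofReal (10 * (10 * (n:ℝ)) ^ (2 * n) * c₀ *
        ((α + r) ^ (2 * n) * (β + (α + r) * r + r ^ 2))) := by
  have hn' : (1:ℝ) ≤ (n:ℝ) := by exact_mod_cast hn
  have hnpos : (0:ℝ) < (n:ℝ) := by linarith
  set h : ℝ := r / (2 * n) with hhdef
  have hh : 0 < h := by positivity
  set s : ℝ := r ^ 2 / 2 with hsdef
  have hs : 0 < s := by positivity
  set K : ℤ := ⌈α / h⌉ + 1 with hKdef
  have hK1 : (1:ℤ) ≤ K := by
    have : (0:ℤ) ≤ ⌈α / h⌉ := Int.ceil_nonneg (div_nonneg hα hh.le)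
    omega
  set V : ℝ := β + (α + r) * r with hVdef
  have hV : 0 ≤ V := by positivity
  set M : ℤ := ⌈V / s⌉ + 1 with hMdef
  have hM1 : (1:ℤ) ≤ M := by
    have : (0:ℤ) ≤ ⌈V / s⌉ := Int.ceil_nonneg (div_nonneg hV hs.le)
    omega
  set zc : (Fin n → ℤ × ℤ) → (Fin n → ℂ) :=
    fun k j => (⟨((k j).1 : ℝ) * h, ((k j).2 : ℝ) * h⟩ : ℂ) with hzcdef
  set ctr : (Fin n → ℤ × ℤ) × ℤ → Heis n :=
    fun km => Hmul p (zc km.1, (km.2 : ℝ) * s) with hctrdef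
  set F : Finset ((Fin n → ℤ × ℤ) × ℤ) :=
    (Fintype.piFinset fun _ => Finset.Icc (-K) K ×ˢ Finset.Icc (-K) K) ×ˢ
      Finset.Icc (-M) M with hFdef
  -- a helper for rounding membership
  have hroundK : ∀ x : ℝ, |x| ≤ α → round (x / h) ∈ Finset.Icc (-K) K := by
    intro x hx
    have h1 : |(round (x / h) : ℝ)| ≤ (K:ℝ) := by
      have h2 : |x / h| ≤ α / h := by
        rw [abs_div, abs_of_pos hh]
        gcongr
      calc |(round (x / h) : ℝ)| ≤ |x / h| + 1/2 := HeisAux.round_abs_le _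
        _ ≤ α / h + 1/2 := by linarith
        _ ≤ (K:ℝ) := by
            have := Int.le_ceil (α / h)
            push_cast [hKdef]
            linarith
    have h2 : |round (x / h)| ≤ K := by exact_mod_cast h1
    rw [Finset.mem_Icc]
    exact ⟨neg_le_of_abs_le h2, le_of_abs_le h2⟩
  have hcover : Htranslate p (Qbox n α β) ⊆ ⋃ i ∈ F, Hball (ctr i) r := by
    intro q hq
    set b : Heis n := Hmul (Hinv p) q with hbdef
    have hb1 : znorm b.1 ≤ α := hq.1
    have hb2 : |b.2| ≤ β := hq.2
    set k : Fin n → ℤ × ℤ :=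
      fun j => (round ((b.1 j).re / h), round ((b.1 j).im / h)) with hkdef
    -- error bound for the horizontal part
    have herr : znorm (b.1 - zc k) ≤ r / 2 := by
      have hj : ∀ j : Fin n, ‖(b.1 - zc k) j‖ ^ 2 ≤ h ^ 2 / 2 := by
        intro j
        have hre : |((b.1 - zc k) j).re| ≤ h / 2 := by
          have : ((b.1 - zc k) j).re = (b.1 j).re - round ((b.1 j).re / h) * h := rfl
          rw [this]
          exact HeisAux.round_grid_abs hh
        have him : |((b.1 - zc k) j).im| ≤ h / 2 := by
          have : ((b.1 - zc k) j).im = (b.1 j).im - round ((b.1 j).im / h) * h := rfl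
          rw [this]
          exact HeisAux.round_grid_abs hh
        have hnsq : ‖(b.1 - zc k) j‖ ^ 2 = ((b.1 - zc k) j).re ^ 2 + ((b.1 - zc k) j).im ^ 2 := by
          rw [Complex.sq_norm, Complex.normSq_apply]
          ring
        rw [hnsq]
        nlinarith [_root_.sq_abs (((b.1 - zc k) j).re), _root_.sq_abs (((b.1 - zc k) j).im),
          abs_nonneg (((b.1 - zc k) j).re), abs_nonneg (((b.1 - zc k) j).im), hh.le]
      have hsum : ∑ j, ‖(b.1 - zc k) j‖ ^ 2 ≤ (r/2) ^ 2 := by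
        calc ∑ j, ‖(b.1 - zc k) j‖ ^ 2 ≤ ∑ _j : Fin n, h ^ 2 / 2 :=
              Finset.sum_le_sum (fun j _ => hj j)
          _ = (n:ℝ) * (h ^ 2 / 2) := by
              rw [Finset.sum_const, Finset.card_univ, Fintype.card_fin, nsmul_eq_mul]
          _ ≤ (r/2) ^ 2 := by
              rw [hhdef, div_pow]
              rw [show (n:ℝ) * (r^2/(2*(n:ℝ))^2/2) = r^2/(8*(n:ℝ)) by field_simp; ring]
              rw [show ((r:ℝ)/2)^2 = r^2/4 by ring]
              rw [div_le_div_iff₀ (by positivity) (by norm_num)]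
              nlinarith [sq_nonneg r, hn']
      calc znorm (b.1 - zc k) = Real.sqrt (∑ j, ‖(b.1 - zc k) j‖ ^ 2) := rfl
        _ ≤ Real.sqrt ((r/2)^2) := Real.sqrt_le_sqrt hsum
        _ = r/2 := Real.sqrt_sq (by positivity)
    have hzcnorm : znorm (zc k) ≤ α + r / 2 := by
      have h1 : znorm (zc k) ≤ znorm (zc k - b.1) + znorm b.1 := by
        calc znorm (zc k) = znorm ((zc k - b.1) + b.1) := by rw [sub_add_cancel]
          _ ≤ znorm (zc k - b.1) + znorm b.1 := HeisAux.znorm_add_le _ _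
      have h2 : znorm (zc k - b.1) = znorm (b.1 - zc k) := by
        rw [← HeisAux.znorm_neg (zc k - b.1), neg_sub]
      linarith
    set w : ℝ := b.2 - (1/2) * (HeisAux.ws (zc k) b.1).im with hwdef
    set m : ℤ := round (w / s) with hmdef
    have hwV : |w| ≤ V := by
      have h1 : (HeisAux.ws (zc k) b.1).im = (HeisAux.ws (zc k) (b.1 - zc k)).im := by
        conv_lhs => rw [show b.1 = (b.1 - zc k) + zc k from (sub_add_cancel _ _).symm]
        rw [HeisAux.ws_add_right]
        simp [HeisAux.ws_self_im]
      have h2 : |(HeisAux.ws (zc k) (b.1 - zc k)).im| ≤ (α + r/2) * (r/2) := by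
        refine (HeisAux.abs_ws_im_le _ _).trans ?_
        exact mul_le_mul hzcnorm herr (HeisAux.znorm_nonneg _) (by linarith)
      have h3 : |w| ≤ |b.2| + (1/2) * |(HeisAux.ws (zc k) b.1).im| := by
        rw [hwdef]
        calc |b.2 - (1/2) * (HeisAux.ws (zc k) b.1).im| ≤
            |b.2| + |(1/2) * (HeisAux.ws (zc k) b.1).im| := abs_sub _ _
          _ = |b.2| + (1/2) * |(HeisAux.ws (zc k) b.1).im| := by
              rw [abs_mul, abs_of_pos (by norm_num : (0:ℝ) < 1/2)]
      rw [h1] at h3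
      rw [hVdef]
      nlinarith [abs_nonneg ((HeisAux.ws (zc k) (b.1 - zc k)).im)]
    have hmmem : m ∈ Finset.Icc (-M) M := by
      have h1 : |(m : ℝ)| ≤ (M:ℝ) := by
        have h2 : |w / s| ≤ V / s := by
          rw [abs_div, abs_of_pos hs]
          gcongr
        calc |(m:ℝ)| ≤ |w / s| + 1/2 := HeisAux.round_abs_le _
          _ ≤ V / s + 1/2 := by linarith
          _ ≤ (M:ℝ) := by
              have := Int.le_ceil (V / s)
              push_cast [hMdef]
              linarith
      have h2 : |m| ≤ M := by exact_mod_cast h1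
      rw [Finset.mem_Icc]
      exact ⟨neg_le_of_abs_le h2, le_of_abs_le h2⟩
    have hkmem : k ∈ Fintype.piFinset fun _ : Fin n => Finset.Icc (-K) K ×ˢ Finset.Icc (-K) K := by
      rw [Fintype.mem_piFinset]
      intro j
      rw [Finset.mem_product]
      constructor
      · exact hroundK _ ((Complex.abs_re_le_norm (b.1 j)).trans
          ((HeisAux.norm_coord_le b.1 j).trans hb1))
      · exact hroundK _ ((Complex.abs_im_le_norm (b.1 j)).trans
          ((HeisAux.norm_coord_le b.1 j).trans hb1))
    have hFmem : (k, m) ∈ F := by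
      rw [hFdef, Finset.mem_product]
      exact ⟨hkmem, hmmem⟩
    refine Set.mem_iUnion₂.mpr ⟨(k, m), hFmem, ?_⟩
    -- show q is in the ball around ctr (k, m)
    show Hdist (ctr (k, m)) q < r
    have hq' : q = Hmul p b := (hmul_inv_cancel p q).symm
    rw [hq', hctrdef]
    rw [hdist_hmul]
    show koranyi (Hmul (Hinv (zc k, (m:ℝ) * s)) b) < r
    refine koranyi_lt hr ?_ ?_
    · show znorm (-(zc k) + b.1) ≤ r / 2
      rw [neg_add_eq_sub]
      exact herr
    · show |-((m:ℝ) * s) + b.2 + (1/2) * (HeisAux.ws (-(zc k)) b.1).im| ≤ r ^ 2 / 4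
      have he : -((m:ℝ) * s) + b.2 + (1/2) * (HeisAux.ws (-(zc k)) b.1).im
          = w - round (w / s) * s := by
        rw [HeisAux.ws_neg_left, Complex.neg_im, hwdef, hmdef]
        ring
      rw [he]
      calc |w - round (w / s) * s| ≤ s / 2 := HeisAux.round_grid_abs hs
        _ = r ^ 2 / 4 := by rw [hsdef]; ring
  -- cardinality facts
  have hIccK : ((Finset.Icc (-K) K).card : ℝ) = 2*(K:ℝ)+1 := by
    have h2K : (0:ℤ) ≤ 2*K+1 := by linarith
    rw [Int.card_Icc, show K + 1 - -K = 2*K+1 by ring]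
    rw [show (((2*K+1 : ℤ).toNat : ℕ) : ℝ) = (((2*K+1 : ℤ)) : ℝ) by
      exact_mod_cast congrArg (Int.cast : ℤ → ℝ) (Int.toNat_of_nonneg h2K)]
    push_cast
    ring
  have hIccM : ((Finset.Icc (-M) M).card : ℝ) = 2*(M:ℝ)+1 := by
    have h2M : (0:ℤ) ≤ 2*M+1 := by linarith
    rw [Int.card_Icc, show M + 1 - -M = 2*M+1 by ring]
    rw [show (((2*M+1 : ℤ).toNat : ℕ) : ℝ) = (((2*M+1 : ℤ)) : ℝ) by
      exact_mod_cast congrArg (Int.cast : ℤ → ℝ) (Int.toNat_of_nonneg h2M)]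
    push_cast
    ring
  have hcard : (F.card : ℝ) = ((2*(K:ℝ)+1)^2)^n * (2*(M:ℝ)+1) := by
    rw [hFdef, Finset.card_product, Fintype.card_piFinset]
    push_cast
    rw [Finset.prod_const, Finset.card_univ, Fintype.card_fin]
    rw [Finset.card_product]
    push_cast
    rw [hIccK, hIccM]
    ring
  -- numeric bounds on the grid sizes
  have hKR : 2*(K:ℝ)+1 ≤ 10*(n:ℝ)*(α+r)/r := by
    have hceil : (⌈α/h⌉:ℝ) < α/h + 1 := Int.ceil_lt_add_one _
    have hKle : (K:ℝ) ≤ α/h + 2 := by push_cast [hKdef]; linarith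
    have hah : α/h = 2*(n:ℝ)*α/r := by rw [hhdef]; field_simp
    have h1 : 2*(K:ℝ)+1 ≤ (4*(n:ℝ)*α + 5*r)/r := by
      rw [show (4*(n:ℝ)*α + 5*r)/r = 4*(n:ℝ)*α/r + 5 by field_simp]
      rw [hah] at hKle
      rw [show 4*(n:ℝ)*α/r = 2*(2*(n:ℝ)*α/r) by ring]
      linarith
    refine h1.trans ?_
    rw [div_le_div_iff₀ hr hr]
    nlinarith [mul_nonneg (mul_nonneg hnpos.le hα) hr.le,
      mul_nonneg (sub_nonneg.mpr hn') (mul_nonneg hr.le hr.le),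
      mul_nonneg hr.le hr.le]
  have hMR : 2*(M:ℝ)+1 ≤ 10*(β + (α+r)*r + r^2)/r^2 := by
    have hceil : (⌈V/s⌉:ℝ) < V/s + 1 := Int.ceil_lt_add_one _
    have hMle : (M:ℝ) ≤ V/s + 2 := by push_cast [hMdef]; linarith
    have hvs : V/s = 2*V/r^2 := by rw [hsdef]; field_simp
    have h1 : 2*(M:ℝ)+1 ≤ (4*V + 5*r^2)/r^2 := by
      rw [show (4*V + 5*r^2)/r^2 = 2*(2*V/r^2) + 5 by field_simp; ring]
      rw [hvs] at hMle
      linarith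
    refine h1.trans ?_
    rw [div_le_div_iff₀ (by positivity) (by positivity)]
    rw [hVdef]
    nlinarith [mul_nonneg hβ (mul_nonneg hr.le hr.le),
      mul_nonneg (mul_nonneg (add_nonneg hα hr.le) hr.le) (mul_nonneg hr.le hr.le),
      mul_nonneg (mul_nonneg hr.le hr.le) (mul_nonneg hr.le hr.le)]
  -- the real-number total bound
  have hK0 : (0:ℝ) ≤ 2*(K:ℝ)+1 := by
    have : (1:ℝ) ≤ (K:ℝ) := by exact_mod_cast hK1
    linarith
  have hM0 : (0:ℝ) ≤ 2*(M:ℝ)+1 := by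
    have : (1:ℝ) ≤ (M:ℝ) := by exact_mod_cast hM1
    linarith
  have hreal : (F.card : ℝ) * (c₀ * r ^ (2*n+2)) ≤
      10 * (10 * (n:ℝ)) ^ (2 * n) * c₀ * ((α + r) ^ (2 * n) * (β + (α + r) * r + r ^ 2)) := by
    have hA1 : ((2*(K:ℝ)+1)^2)^n ≤ ((10*(n:ℝ)*(α+r)/r)^2)^n :=
      pow_le_pow_left₀ (sq_nonneg _) (pow_le_pow_left₀ hK0 hKR 2) n
    have hB1 : 2*(M:ℝ)+1 ≤ 10*(β + (α+r)*r + r^2)/r^2 := hMR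
    have hprod : (F.card : ℝ) ≤ ((10*(n:ℝ)*(α+r)/r)^2)^n * (10*(β + (α+r)*r + r^2)/r^2) := by
      rw [hcard]
      exact mul_le_mul hA1 hB1 hM0 (by positivity)
    have hEq : ((10*(n:ℝ)*(α+r)/r)^2)^n * (10*(β + (α+r)*r + r^2)/r^2) * (c₀ * r ^ (2*n+2)) =
        10 * (10 * (n:ℝ)) ^ (2 * n) * c₀ * ((α + r) ^ (2 * n) * (β + (α + r) * r + r ^ 2)) := by
      rw [← pow_mul, div_pow, pow_add r (2*n) 2, mul_pow, mul_pow]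
      field_simp
    calc (F.card : ℝ) * (c₀ * r ^ (2*n+2)) ≤
        ((10*(n:ℝ)*(α+r)/r)^2)^n * (10*(β + (α+r)*r + r^2)/r^2) * (c₀ * r ^ (2*n+2)) :=
          mul_le_mul_of_nonneg_right hprod (by positivity)
      _ = _ := hEq
  -- put everything together
  calc μ (Htranslate p (Qbox n α β)) ≤ μ (⋃ i ∈ F, Hball (ctr i) r) := measure_mono hcover
    _ ≤ ∑ i ∈ F, μ (Hball (ctr i) r) := measure_biUnion_finset_le F _
    _ ≤ ∑ _i ∈ F, ENNReal.ofReal (c₀ * r ^ (2*n+2)) :=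
        Finset.sum_le_sum (fun i _ => hA (ctr i) r hr)
    _ = (F.card : ENNReal) * ENNReal.ofReal (c₀ * r ^ (2*n+2)) := by
        rw [Finset.sum_const, nsmul_eq_mul]
    _ = ENNReal.ofReal ((F.card : ℝ) * (c₀ * r ^ (2*n+2))) := by
        rw [ENNReal.ofReal_mul (Nat.cast_nonneg _), ENNReal.ofReal_natCast]
    _ ≤ _ := ENNReal.ofReal_le_ofReal hreal

end HeisAux

/-- If `μ` is upper Ahlfors regular on `ℍⁿ` (with exponent the
homogeneous dimension `Q = 2n+2`), then there is `c > 0` such that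
`μ((ρ,τ)∘Q_{α,β}) ≤ c·α^{2n}·β` for every `(ρ,τ) ∈ ℍⁿ` and all `α, β ≥ 0`. -/
theorem measure_translated_box_le
    (n : ℕ) (hn : 1 ≤ n) (μ : Measure (Heis n)) (c₀ : ℝ) (hc₀ : 0 < c₀)
    (hAhlfors : ∀ (p : Heis n) (r : ℝ), 0 < r →
      μ (Hball p r) ≤ ENNReal.ofReal (c₀ * r ^ (2 * n + 2))) :
    ∃ c > (0 : ℝ), ∀ (p : Heis n) (α β : ℝ), 0 ≤ α → 0 ≤ β →
      μ (Htranslate p (Qbox n α β)) ≤ ENNReal.ofReal (c * α ^ (2 * n) * β) := by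
  have hnR : (0:ℝ) < (n:ℝ) := by exact_mod_cast hn
  refine ⟨10 * (10 * (n:ℝ)) ^ (2 * n) * c₀, ?_, ?_⟩
  · have h1 : (0:ℝ) < 10 * (n:ℝ) := by linarith
    have h2 : (0:ℝ) < (10 * (n:ℝ)) ^ (2 * n) := pow_pos h1 _
    positivity
  · intro p α β hα hβ
    set c : ℝ := 10 * (10 * (n:ℝ)) ^ (2 * n) * c₀ with hcdef
    have hcont : Continuous fun r : ℝ =>
        ENNReal.ofReal (c * ((α + r) ^ (2 * n) * (β + (α + r) * r + r ^ 2))) := by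
      refine ENNReal.continuous_ofReal.comp ?_
      fun_prop
    have ht : Filter.Tendsto
        (fun r : ℝ => ENNReal.ofReal (c * ((α + r) ^ (2 * n) * (β + (α + r) * r + r ^ 2))))
        (nhdsWithin 0 (Set.Ioi 0))
        (nhds (ENNReal.ofReal (c * α ^ (2 * n) * β))) := by
      have h0 := (hcont.tendsto 0).mono_left (nhdsWithin_le_nhds (s := Set.Ioi (0:ℝ)))
      have heq : ENNReal.ofReal (c * ((α + 0) ^ (2 * n) * (β + (α + 0) * 0 + 0 ^ 2)))
          = ENNReal.ofReal (c * α ^ (2 * n) * β) := by norm_num [mul_assoc]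
      rwa [heq] at h0
    refine ge_of_tendsto ht ?_
    filter_upwards [self_mem_nhdsWithin] with r hr
    exact HeisAux.cover_bound n hn μ c₀ hAhlfors p α β r hα hβ hr hc₀.le
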